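/- arXiv:1510.05305 — 3 statements merged into one kernel-verified Lean document; each statement's English description precedes it below -/
import Mathlib

section
/- Let n sites each carry the Hilbert space ℂ^d, let E be an arbitrary set of (unordered) pairs of distinct sites, and let H_P = Σ_{(j,k)∈E} P_{j,k} be the sum of the corresponding permutation operators. Fix a site m and a single-site Lindblad generator 𝓛_m on ℂ^d specified by a local Hamiltonian h and Lindblad operators {l_j}. Let ρ* be a density matrix on ℂ^d with 𝓛_m(ρ*) = 0. Then the product state ρ∞ = ρ*^{⊗n} is a steady state of the full Lindblad generator 𝓛 on (ℂ^d)^{⊗n} whose Hamiltonian is H_P plus h embedded at site m and whose Lindblad operators are the l_j embedded at site m: 𝓛(ρ∞) = 0. -/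
open Matrix Finset ComplexOrder

noncomputable section

/-- The Lindblad generator associated to a Hamiltonian `H` and Lindblad operators `L k`:
`𝓛(ρ) = i(ρH − Hρ) + Σ_k (2 L_k ρ L_k† − ρ L_k† L_k − L_k† L_k ρ)`. -/
def lindblad {ι : Type*} [Fintype ι] [DecidableEq ι] {K : ℕ}
    (H : Matrix ι ι ℂ) (L : Fin K → Matrix ι ι ℂ) (ρ : Matrix ι ι ℂ) : Matrix ι ι ℂ :=
  Complex.I • (ρ * H - H * ρ) +
    ∑ k : Fin K, ((2 : ℂ) • (L k * ρ * (L k)ᴴ) - ρ * ((L k)ᴴ * L k) - ((L k)ᴴ * L k) * ρ)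

/-- A density matrix: positive semidefinite with trace 1. -/
def IsDensityMatrix {ι : Type*} [Fintype ι] [DecidableEq ι] (ρ : Matrix ι ι ℂ) : Prop :=
  ρ.PosSemidef ∧ ρ.trace = 1

/-- Embedding of a single-site operator `A` at site `m` of an `n`-site lattice
(each site of dimension `d`): it acts as `A` on factor `m` and as identity elsewhere. -/
def embed {n d : ℕ} (m : Fin n) (A : Matrix (Fin d) (Fin d) ℂ) :
    Matrix (Fin n → Fin d) (Fin n → Fin d) ℂ :=
  fun x y => A (x m) (y m) * ∏ i ∈ Finset.univ.erase m, (if x i = y i then (1 : ℂ) else 0)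

/-- The permutation (swap) operator `P_{j,k}` exchanging tensor factors `j` and `k`. -/
def swapOp {n d : ℕ} (j k : Fin n) : Matrix (Fin n → Fin d) (Fin n → Fin d) ℂ :=
  fun x y => if x = y ∘ (Equiv.swap j k) then 1 else 0

/-- The `n`-fold tensor power `ρ^{⊗n}` of a one-site matrix `ρ`. -/
def prodState (n : ℕ) {d : ℕ} (ρ : Matrix (Fin d) (Fin d) ℂ) :
    Matrix (Fin n → Fin d) (Fin n → Fin d) ℂ :=
  fun x y => ∏ i, ρ (x i) (y i)

/-- The tensor product `A 0 ⊗ A 1 ⊗ ⋯ ⊗ A (n-1)` of a family of one-site matrices. -/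
def tensorFam {n d : ℕ} (A : Fin n → Matrix (Fin d) (Fin d) ℂ) :
    Matrix (Fin n → Fin d) (Fin n → Fin d) ℂ :=
  fun x y => ∏ i, A i (x i) (y i)

/-- Partial trace over all sites except site `m`: the reduced state at site `m`. -/
def ptraceAt {n d : ℕ} (m : Fin n) (ρ : Matrix (Fin n → Fin d) (Fin n → Fin d) ℂ) :
    Matrix (Fin d) (Fin d) ℂ :=
  fun a b => ∑ g : Fin n → Fin d, if g m = a then ρ g (Function.update g m b) else 0

def σx : Matrix (Fin 2) (Fin 2) ℂ := !![0, 1; 1, 0]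
def σy : Matrix (Fin 2) (Fin 2) ℂ := !![0, -Complex.I; Complex.I, 0]
def σz : Matrix (Fin 2) (Fin 2) ℂ := !![1, 0; 0, -1]

/-- Embedding of an operator on the subsystem `A` of the first `n` sites into `n+1` sites. -/
def embedA {n d : ℕ} (B : Matrix (Fin n → Fin d) (Fin n → Fin d) ℂ) :
    Matrix (Fin (n+1) → Fin d) (Fin (n+1) → Fin d) ℂ :=
  fun x y => B (x ∘ Fin.castSucc) (y ∘ Fin.castSucc) *
    (if x (Fin.last n) = y (Fin.last n) then (1 : ℂ) else 0)


namespace SteadyAux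

variable {n d : ℕ}

lemma sum_update_eq (m : Fin n) (y : Fin n → Fin d) (F : (Fin n → Fin d) → ℂ)
    (hF : ∀ z, z ≠ Function.update y m (z m) → F z = 0) :
    ∑ z, F z = ∑ c, F (Function.update y m c) := by
  have key : ∀ z : Fin n → Fin d,
      F z = ∑ c, if z = Function.update y m c then F (Function.update y m c) else 0 := by
    intro z
    by_cases hz : z = Function.update y m (z m)
    · rw [Finset.sum_eq_single (z m)]
      · rw [if_pos hz, ← hz]
      · intro c _ hc
        rw [if_neg]
        intro hzz
        apply hc
        rw [hzz, Function.update_self]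
      · simp
    · rw [hF z hz, Finset.sum_eq_zero]
      intro c _
      rw [if_neg]
      intro hzz
      apply hz
      have hc : c = z m := by rw [hzz, Function.update_self]
      rw [← hc]; exact hzz
  calc ∑ z, F z
      = ∑ z, ∑ c, if z = Function.update y m c then F (Function.update y m c) else 0 :=
        Finset.sum_congr rfl fun z _ => key z
    _ = ∑ c, ∑ z : Fin n → Fin d,
          if z = Function.update y m c then F (Function.update y m c) else 0 := Finset.sum_comm
    _ = ∑ c, F (Function.update y m c) := by
        refine Finset.sum_congr rfl fun c _ => ?_
        simp

lemma tensorFam_update_apply (m : Fin n) (B : Fin n → Matrix (Fin d) (Fin d) ℂ)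
    (A : Matrix (Fin d) (Fin d) ℂ) (x y : Fin n → Fin d) :
    tensorFam (Function.update B m A) x y
      = A (x m) (y m) * ∏ i ∈ Finset.univ.erase m, B i (x i) (y i) := by
  unfold tensorFam
  rw [← Finset.mul_prod_erase Finset.univ _ (Finset.mem_univ m), Function.update_self]
  congr 1
  exact Finset.prod_congr rfl fun i hi => by
    rw [Function.update_of_ne (Finset.ne_of_mem_erase hi)]

lemma embed_mul_tensor (m : Fin n) (A : Matrix (Fin d) (Fin d) ℂ)
    (B : Fin n → Matrix (Fin d) (Fin d) ℂ) :
    embed m A * tensorFam B = tensorFam (Function.update B m (A * B m)) := by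
  ext x y
  rw [Matrix.mul_apply, tensorFam_update_apply, Matrix.mul_apply, Finset.sum_mul]
  rw [sum_update_eq m x (fun z => embed m A x z * tensorFam B z y) ?_]
  · refine Finset.sum_congr rfl fun c _ => ?_
    have h1 : embed m A x (Function.update x m c) = A (x m) c := by
      unfold embed
      rw [Function.update_self, Finset.prod_eq_one, mul_one]
      intro i hi
      rw [Function.update_of_ne (Finset.ne_of_mem_erase hi), if_pos rfl]
    have h2 : tensorFam B (Function.update x m c) y
        = B m c (y m) * ∏ i ∈ Finset.univ.erase m, B i (x i) (y i) := by
      unfold tensorFam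
      rw [← Finset.mul_prod_erase Finset.univ _ (Finset.mem_univ m), Function.update_self]
      congr 1
      exact Finset.prod_congr rfl fun i hi => by
        rw [Function.update_of_ne (Finset.ne_of_mem_erase hi)]
    rw [h1, h2]
    ring
  · intro z hz
    have hex : ∃ i, z i ≠ Function.update x m (z m) i := by
      by_contra hcon
      push_neg at hcon
      exact hz (funext hcon)
    obtain ⟨i, hi⟩ := hex
    have him : i ≠ m := fun hh => hi (by rw [hh, Function.update_self])
    rw [Function.update_of_ne him] at hi
    show embed m A x z * tensorFam B z y = 0
    unfold embed
    rw [Finset.prod_eq_zero (Finset.mem_erase.mpr ⟨him, Finset.mem_univ i⟩)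
      (by rw [if_neg (fun hh => hi hh.symm)])]
    ring

lemma tensor_mul_embed (m : Fin n) (A : Matrix (Fin d) (Fin d) ℂ)
    (B : Fin n → Matrix (Fin d) (Fin d) ℂ) :
    tensorFam B * embed m A = tensorFam (Function.update B m (B m * A)) := by
  ext x y
  rw [Matrix.mul_apply, tensorFam_update_apply, Matrix.mul_apply, Finset.sum_mul]
  rw [sum_update_eq m y (fun z => tensorFam B x z * embed m A z y) ?_]
  · refine Finset.sum_congr rfl fun c _ => ?_
    have h1 : embed m A (Function.update y m c) y = A c (y m) := by
      unfold embed
      rw [Function.update_self, Finset.prod_eq_one, mul_one]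
      intro i hi
      rw [Function.update_of_ne (Finset.ne_of_mem_erase hi), if_pos rfl]
    have h2 : tensorFam B x (Function.update y m c)
        = B m (x m) c * ∏ i ∈ Finset.univ.erase m, B i (x i) (y i) := by
      unfold tensorFam
      rw [← Finset.mul_prod_erase Finset.univ _ (Finset.mem_univ m), Function.update_self]
      congr 1
      exact Finset.prod_congr rfl fun i hi => by
        rw [Function.update_of_ne (Finset.ne_of_mem_erase hi)]
    rw [h1, h2]
    ring
  · intro z hz
    have hex : ∃ i, z i ≠ Function.update y m (z m) i := by
      by_contra hcon
      push_neg at hcon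
      exact hz (funext hcon)
    obtain ⟨i, hi⟩ := hex
    have him : i ≠ m := fun hh => hi (by rw [hh, Function.update_self])
    rw [Function.update_of_ne him] at hi
    show tensorFam B x z * embed m A z y = 0
    unfold embed
    rw [Finset.prod_eq_zero (Finset.mem_erase.mpr ⟨him, Finset.mem_univ i⟩)
      (by rw [if_neg hi])]
    ring

lemma swap_comm (j k : Fin n) (ρ : Matrix (Fin d) (Fin d) ℂ) :
    prodState n ρ * swapOp j k = swapOp j k * prodState n ρ := by
  ext x y
  rw [Matrix.mul_apply, Matrix.mul_apply]
  rw [Finset.sum_eq_single (y ∘ Equiv.swap j k), Finset.sum_eq_single (x ∘ Equiv.swap j k)]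
  · have h1 : swapOp (d := d) j k (y ∘ Equiv.swap j k) y = 1 := by
      unfold swapOp; rw [if_pos rfl]
    have h2 : swapOp (d := d) j k x (x ∘ Equiv.swap j k) = 1 := by
      unfold swapOp
      rw [if_pos]
      funext i
      simp [Equiv.swap_apply_self]
    rw [h1, h2, mul_one, one_mul]
    unfold prodState
    exact Fintype.prod_equiv (Equiv.swap j k) _ _ (fun i => by simp [Equiv.swap_apply_self])
  · intro z _ hzz
    have hne : ¬ x = z ∘ Equiv.swap j k := by
      intro hh
      apply hzz
      funext i
      rw [hh]
      simp [Equiv.swap_apply_self]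
    show swapOp j k x z * prodState n ρ z y = 0
    unfold swapOp
    rw [if_neg hne, zero_mul]
  · simp
  · intro z _ hzz
    show prodState n ρ x z * swapOp j k z y = 0
    unfold swapOp
    rw [if_neg hzz, mul_zero]
  · simp

lemma embed_conjT (m : Fin n) (A : Matrix (Fin d) (Fin d) ℂ) :
    (embed m A)ᴴ = embed m Aᴴ := by
  ext x y
  show star (embed m A y x) = embed m Aᴴ x y
  unfold embed
  rw [star_mul']
  congr 1
  · rw [star_prod]
    refine Finset.prod_congr rfl fun i _ => ?_
    by_cases hxy : x i = y i
    · rw [if_pos hxy, if_pos hxy.symm, star_one]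
    · rw [if_neg (fun hh => hxy hh.symm), if_neg hxy, star_zero]

def slotMap (m : Fin n) (C : Fin n → Matrix (Fin d) (Fin d) ℂ) :
    Matrix (Fin d) (Fin d) ℂ →ₗ[ℂ] Matrix (Fin n → Fin d) (Fin n → Fin d) ℂ where
  toFun A := tensorFam (Function.update C m A)
  map_add' A B := by
    ext x y
    simp [tensorFam_update_apply, Matrix.add_apply, add_mul]
  map_smul' c A := by
    ext x y
    simp [tensorFam_update_apply, Matrix.smul_apply, smul_eq_mul, mul_assoc]

end SteadyAux

/-- For a permutation Hamiltonian `H_P = Σ_{(j,k)∈E} P_{j,k}` over an arbitrary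
set `E` of pairs of distinct sites, together with a single-site Lindblad generator (Hamiltonian
`h`, Lindblad operators `l j`) embedded at site `m`, any one-site steady density matrix `ρ*` of
the local generator gives rise to the product steady state `ρ*^{⊗n}` of the full generator. -/
theorem product_state_is_steady_state
    (n d K : ℕ) (E : Finset (Fin n × Fin n)) (hE : ∀ p ∈ E, p.1 ≠ p.2)
    (m : Fin n) (h : Matrix (Fin d) (Fin d) ℂ) (hherm : h.IsHermitian)
    (l : Fin K → Matrix (Fin d) (Fin d) ℂ)
    (ρstar : Matrix (Fin d) (Fin d) ℂ) (hρ : IsDensityMatrix ρstar)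
    (hss : lindblad h l ρstar = 0) :
    lindblad ((∑ p ∈ E, swapOp p.1 p.2) + embed m h) (fun j => embed m (l j))
      (prodState n ρstar) = 0 := by
  classical
  set C : Fin n → Matrix (Fin d) (Fin d) ℂ := fun _ => ρstar with hC
  set T := SteadyAux.slotMap m C with hT
  have hTapp : ∀ X, T X = tensorFam (Function.update C m X) := fun X => rfl
  have hps : prodState n ρstar = tensorFam C := rfl
  have e_right : ∀ A, prodState n ρstar * embed m A = T (ρstar * A) := by
    intro A
    rw [hps, SteadyAux.tensor_mul_embed, hTapp]
  have e_left : ∀ A, embed m A * prodState n ρstar = T (A * ρstar) := by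
    intro A
    rw [hps, SteadyAux.embed_mul_tensor, hTapp]
  have e_Tright : ∀ X A, T X * embed m A = T (X * A) := by
    intro X A
    rw [hTapp X, SteadyAux.tensor_mul_embed, hTapp]
    simp [Function.update_idem, Function.update_self]
  have e_Tleft : ∀ X A, embed m A * T X = T (A * X) := by
    intro X A
    rw [hTapp X, SteadyAux.embed_mul_tensor, hTapp]
    simp [Function.update_idem, Function.update_self]
  have hswap : prodState n ρstar * (∑ p ∈ E, swapOp p.1 p.2)
      = (∑ p ∈ E, swapOp p.1 p.2) * prodState n ρstar := by
    rw [Finset.mul_sum, Finset.sum_mul]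
    exact Finset.sum_congr rfl fun p _ => SteadyAux.swap_comm p.1 p.2 ρstar
  simp only [lindblad]
  have hham : prodState n ρstar * ((∑ p ∈ E, swapOp p.1 p.2) + embed m h)
      - ((∑ p ∈ E, swapOp p.1 p.2) + embed m h) * prodState n ρstar
      = T (ρstar * h - h * ρstar) := by
    rw [mul_add, add_mul, e_right, e_left, hswap, map_sub]
    abel
  have hdiss : ∀ k, (2 : ℂ) • (embed m (l k) * prodState n ρstar * (embed m (l k))ᴴ)
      - prodState n ρstar * ((embed m (l k))ᴴ * embed m (l k))
      - ((embed m (l k))ᴴ * embed m (l k)) * prodState n ρstar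
      = T ((2 : ℂ) • (l k * ρstar * (l k)ᴴ) - ρstar * ((l k)ᴴ * l k)
          - ((l k)ᴴ * l k) * ρstar) := by
    intro k
    rw [SteadyAux.embed_conjT, e_left (l k), e_Tright,
      ← mul_assoc (prodState n ρstar), e_right, e_Tright,
      mul_assoc (embed m (l k)ᴴ), e_left, e_Tleft,
      ← T.map_smul, ← T.map_sub, ← T.map_sub]
    congr 1
    simp [mul_assoc]
  rw [hham]
  simp only [hdiss]
  rw [← T.map_smul, ← map_sum T (fun k : Fin K => (2 : ℂ) • (l k * ρstar * (l k)ᴴ) - ρstar * ((l k)ᴴ * l k) - ((l k)ᴴ * l k) * ρstar) Finset.univ, ← T.map_add]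
  have hloc : Complex.I • (ρstar * h - h * ρstar) +
      ∑ k : Fin K, ((2 : ℂ) • (l k * ρstar * (l k)ᴴ) - ρstar * ((l k)ᴴ * l k)
        - ((l k)ᴴ * l k) * ρstar) = 0 := hss
  rw [hloc, map_zero]
end
end

section
/- Let H_P = Σ_{s=1}^{n−1} P_{s,s+1} be the chain permutation Hamiltonian on (ℂ^d)^{⊗n}, and let E_{ab}^{(r)} denote the matrix unit |a⟩⟨b| embedded at site r (identity elsewhere). Then for every site r and all indices j, k ∈ {1, …, d} with k ≠ j, Σ_{i=1}^{d} E_{ij}^{(r)} H_P E_{ki}^{(r)} = E_{kj}^{(r+1)} + E_{kj}^{(r−1)}, where the term E_{kj}^{(r−1)} is omitted when r = 1 and the term E_{kj}^{(r+1)} is omitted when r = n. -/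
open Matrix Finset ComplexOrder

noncomputable section

lemma embed_std_apply {N d : ℕ} (m : Fin N) (a b : Fin d) (x y : Fin N → Fin d) :
    embed m (Matrix.single a b 1) x y =
      if x m = a ∧ y m = b ∧ ∀ t, t ≠ m → x t = y t then 1 else 0 := by
  unfold embed
  rw [Finset.prod_boole]
  simp only [Matrix.single, Matrix.of_apply, Finset.mem_erase, Finset.mem_univ, and_true]
  by_cases h1 : x m = a <;> by_cases h2 : y m = b <;>
    by_cases h3 : ∀ t, t ≠ m → x t = y t <;>
      simp_all [eq_comm]

lemma stdEmbed_mul {N d : ℕ} (m : Fin N) (a b : Fin d)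
    (M : Matrix (Fin N → Fin d) (Fin N → Fin d) ℂ) (x y : Fin N → Fin d) :
    (embed m (Matrix.single a b 1) * M) x y =
      if x m = a then M (Function.update x m b) y else 0 := by
  rw [Matrix.mul_apply]
  rw [Finset.sum_eq_single (Function.update x m b)]
  · rw [embed_std_apply]
    by_cases h : x m = a
    · rw [if_pos, if_pos h]
      · rw [one_mul]
      · refine ⟨h, by simp, fun t ht => ?_⟩
        rw [Function.update_of_ne ht]
    · rw [if_neg, if_neg h, zero_mul]
      rintro ⟨h1, -, -⟩; exact h h1
  · intro u _ hu
    rw [embed_std_apply, if_neg, zero_mul]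
    rintro ⟨h1, h2, h3⟩
    refine hu (funext fun t => ?_)
    by_cases ht : t = m
    · subst ht; simp [h2]
    · rw [Function.update_of_ne ht]; exact (h3 t ht).symm
  · simp

lemma mul_stdEmbed {N d : ℕ} (m : Fin N) (a b : Fin d)
    (M : Matrix (Fin N → Fin d) (Fin N → Fin d) ℂ) (x y : Fin N → Fin d) :
    (M * embed m (Matrix.single a b 1)) x y =
      if y m = b then M x (Function.update y m a) else 0 := by
  rw [Matrix.mul_apply]
  rw [Finset.sum_eq_single (Function.update y m a)]
  · rw [embed_std_apply]
    by_cases h : y m = b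
    · rw [if_pos, if_pos h]
      · rw [mul_one]
      · refine ⟨by simp, h, fun t ht => ?_⟩
        rw [Function.update_of_ne ht]
    · rw [if_neg, if_neg h, mul_zero]
      rintro ⟨-, h1, -⟩; exact h h1
  · intro u _ hu
    rw [embed_std_apply, if_neg, mul_zero]
    rintro ⟨h1, h2, h3⟩
    refine hu (funext fun t => ?_)
    by_cases ht : t = m
    · subst ht; simp [h1]
    · rw [Function.update_of_ne ht]; exact h3 t ht
  · simp

lemma swap_cond {N d : ℕ} (r r' : Fin N) (hne : r' ≠ r) (j k : Fin d)
    (x y : Fin N → Fin d) (hxy : x r = y r) :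
    (if Function.update x r j = Function.update y r k ∘ Equiv.swap r r' then (1:ℂ) else 0)
      = embed r' (Matrix.single k j 1) x y := by
  rw [embed_std_apply]
  refine if_congr ?_ rfl rfl
  rw [funext_iff]
  constructor
  · intro h
    refine ⟨?_, ?_, fun t ht => ?_⟩
    · have := h r'
      rwa [Function.comp_apply, Equiv.swap_apply_right, Function.update_self,
        Function.update_of_ne hne] at this
    · have := h r
      rw [Function.comp_apply, Equiv.swap_apply_left, Function.update_self,
        Function.update_of_ne hne] at this
      exact this.symm
    · by_cases htr : t = r
      · subst htr; exact hxy
      · have := h t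
        rwa [Function.comp_apply, Equiv.swap_apply_of_ne_of_ne htr ht,
          Function.update_of_ne htr, Function.update_of_ne htr] at this
  · rintro ⟨h1, h2, h3⟩ t
    by_cases htr : t = r
    · subst htr
      rw [Function.comp_apply, Equiv.swap_apply_left, Function.update_self,
        Function.update_of_ne hne]
      exact h2.symm
    · by_cases htr' : t = r'
      · subst htr'
        rw [Function.comp_apply, Equiv.swap_apply_right, Function.update_self,
          Function.update_of_ne hne]
        exact h1
      · rw [Function.comp_apply, Equiv.swap_apply_of_ne_of_ne htr htr',
          Function.update_of_ne htr, Function.update_of_ne htr]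
        exact h3 t htr'

lemma swap_cond_far {N d : ℕ} (r s1 s2 : Fin N) (h1 : s1 ≠ r) (h2 : s2 ≠ r) (j k : Fin d)
    (hkj : k ≠ j) (x y : Fin N → Fin d) :
    (if Function.update x r j = Function.update y r k ∘ Equiv.swap s1 s2 then (1:ℂ) else 0)
      = 0 := by
  rw [if_neg]
  intro h
  have := congrFun h r
  rw [Function.comp_apply, Equiv.swap_apply_of_ne_of_ne h1.symm h2.symm] at this
  simp at this
  exact hkj this.symm

lemma sum_castSucc_eq {n : ℕ} (r : Fin (n+1)) (g : Fin n → ℂ) :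
    (∑ s : Fin n, if s.castSucc = r then g s else 0)
      = if h : (r:ℕ) < n then g ⟨r, h⟩ else 0 := by
  by_cases h : (r:ℕ) < n
  · rw [dif_pos h, Finset.sum_eq_single ⟨(r:ℕ), h⟩]
    · have hcr : (⟨(r:ℕ), h⟩ : Fin n).castSucc = r := Fin.ext rfl
      rw [if_pos hcr]
    · intro s _ hs
      rw [if_neg]
      intro hc
      exact hs (Fin.ext (by simpa using congrArg Fin.val hc))
    · simp
  · rw [dif_neg h, Finset.sum_eq_zero]
    intro s _
    rw [if_neg]
    intro hc
    have := congrArg Fin.val hc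
    simp at this
    omega

lemma sum_succ_eq {n : ℕ} (r : Fin (n+1)) (g : Fin n → ℂ) :
    (∑ s : Fin n, if s.succ = r then g s else 0)
      = if h : 0 < (r:ℕ) then g ⟨(r:ℕ)-1, by have := r.isLt; omega⟩ else 0 := by
  by_cases h : 0 < (r:ℕ)
  · rw [dif_pos h, Finset.sum_eq_single ⟨(r:ℕ)-1, by have := r.isLt; omega⟩]
    · have hcr : (⟨(r:ℕ)-1, by have := r.isLt; omega⟩ : Fin n).succ = r := Fin.ext (by simp; omega)
      rw [if_pos hcr]
    · intro s _ hs
      rw [if_neg]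
      intro hc
      have := congrArg Fin.val hc
      simp at this
      exact hs (Fin.ext (by simp; omega))
    · simp
  · rw [dif_neg h, Finset.sum_eq_zero]
    intro s _
    rw [if_neg]
    intro hc
    have := congrArg Fin.val hc
    simp at this
    omega

lemma f_eq {n d : ℕ} (r : Fin (n+1)) (j k : Fin d) (hkj : k ≠ j)
    (x y : Fin (n+1) → Fin d) (hxy : x r = y r) (s : Fin n) :
    (if Function.update x r j = Function.update y r k ∘ Equiv.swap s.castSucc s.succ
        then (1:ℂ) else 0)
      = (if s.castSucc = r then embed s.succ (Matrix.single k j 1) x y else 0)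
        + (if s.succ = r then embed s.castSucc (Matrix.single k j 1) x y else 0) := by
  have hcs : s.succ ≠ s.castSucc := by
    intro hc; have := congrArg Fin.val hc; simp at this
  by_cases h1 : s.castSucc = r
  · subst h1
    rw [if_pos rfl, if_neg hcs, add_zero]
    exact swap_cond _ _ hcs j k x y hxy
  · by_cases h2 : s.succ = r
    · subst h2
      rw [if_neg h1, if_pos rfl, zero_add, Equiv.swap_comm]
      exact swap_cond _ _ (Ne.symm hcs) j k x y hxy
    · rw [if_neg h1, if_neg h2, add_zero]
      exact swap_cond_far r s.castSucc s.succ h1 h2 j k hkj x y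

/-- For the chain permutation Hamiltonian `H_P = Σ_s P_{s,s+1}` on `n+1`
sites and matrix units `E_{ab}^{(r)}` embedded at site `r`, one has, for `k ≠ j`,
`Σ_i E_{ij}^{(r)} H_P E_{ki}^{(r)} = E_{kj}^{(r+1)} + E_{kj}^{(r-1)}`, where the term at
`r+1` (resp. `r-1`) is omitted when `r` is the last (resp. first) site. -/
theorem matrix_unit_recursion (n d : ℕ) (r : Fin (n+1)) (j k : Fin d) (hkj : k ≠ j) :
    (∑ i : Fin d,
        embed r (Matrix.single i j (1 : ℂ)) *
          (∑ s : Fin n, swapOp s.castSucc s.succ) *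
            embed r (Matrix.single k i (1 : ℂ)))
      =
    (if h : (r : ℕ) < n then
        embed (⟨(r : ℕ) + 1, by omega⟩ : Fin (n+1)) (Matrix.single k j (1 : ℂ))
      else 0)
    + (if h : 0 < (r : ℕ) then
        embed (⟨(r : ℕ) - 1, by omega⟩ : Fin (n+1)) (Matrix.single k j (1 : ℂ))
      else 0) := by
  ext x y
  have key : ∀ i : Fin d,
      ((embed r (Matrix.single i j 1) * (∑ s : Fin n, swapOp s.castSucc s.succ) *
        embed r (Matrix.single k i 1) :
          Matrix (Fin (n+1) → Fin d) (Fin (n+1) → Fin d) ℂ)) x y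
      = if x r = i then (if y r = i then
          (∑ s : Fin n, swapOp s.castSucc s.succ)
            (Function.update x r j) (Function.update y r k) else 0) else 0 := by
    intro i
    rw [Matrix.mul_assoc, stdEmbed_mul]
    by_cases h : x r = i
    · rw [if_pos h, if_pos h, mul_stdEmbed]
    · rw [if_neg h, if_neg h]
  rw [Matrix.sum_apply]
  simp only [key]
  rw [Finset.sum_ite_eq]
  simp only [Finset.mem_univ, if_true]
  rw [Matrix.add_apply]
  rw [apply_dite (fun M : Matrix (Fin (n+1) → Fin d) (Fin (n+1) → Fin d) ℂ => M x y),
    apply_dite (fun M : Matrix (Fin (n+1) → Fin d) (Fin (n+1) → Fin d) ℂ => M x y)]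
  by_cases hxy : x r = y r
  · rw [if_pos hxy.symm, Matrix.sum_apply]
    simp only [swapOp]
    rw [Finset.sum_congr rfl (fun s _ => f_eq r j k hkj x y hxy s),
      Finset.sum_add_distrib, sum_castSucc_eq, sum_succ_eq]
    by_cases hr1 : (r:ℕ) < n <;> by_cases hr0 : 0 < (r:ℕ) <;>
      simp only [hr1, hr0, dif_pos, dif_neg, not_false_iff, Matrix.zero_apply] <;>
      norm_num <;>
      constructor <;>
      · congr 1
        exact Fin.ext (by simp)
  · rw [if_neg (fun h => hxy h.symm)]
    have z1 : ∀ (h : (r:ℕ) < n),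
        embed (⟨(r:ℕ)+1, by omega⟩ : Fin (n+1)) (Matrix.single k j 1) x y = 0 := by
      intro h
      rw [embed_std_apply, if_neg]
      rintro ⟨-, -, h3⟩
      exact hxy (h3 r (by intro hc; have := congrArg Fin.val hc; simp at this))
    have z2 : ∀ (h : 0 < (r:ℕ)),
        embed (⟨(r:ℕ)-1, by have := r.isLt; omega⟩ : Fin (n+1))
          (Matrix.single k j 1) x y = 0 := by
      intro h
      rw [embed_std_apply, if_neg]
      rintro ⟨-, -, h3⟩
      exact hxy (h3 r (by intro hc; have := congrArg Fin.val hc; simp at this; omega))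
    split_ifs with h1 h2 h2 <;>
      simp [z1, z2, h1, h2, Matrix.zero_apply]

end
end

section
/- Let S ⊆ M_d(ℂ) be a set of d×d matrices whose generated unital subalgebra is all of M_d(ℂ). Then on (ℂ^d)^{⊗n}, the unital subalgebra generated by the embeddings of the elements of S at the edge site 1, together with the chain permutation Hamiltonian H_P = Σ_{s=1}^{n−1} P_{s,s+1}, equals the full matrix algebra M_{d^n}(ℂ) of operators on (ℂ^d)^{⊗n}. -/
open Matrix Finset ComplexOrder

noncomputable section

variable {n d : ℕ}

lemma tensorFam_mul (A B : Fin n → Matrix (Fin d) (Fin d) ℂ) :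
    tensorFam A * tensorFam B = tensorFam (fun i => A i * B i) := by
  ext x y
  simp only [tensorFam, Matrix.mul_apply, ← Finset.prod_mul_distrib]
  rw [Finset.prod_univ_sum]
  simp [Fintype.piFinset_univ]

lemma embed_eq (m : Fin n) (A : Matrix (Fin d) (Fin d) ℂ) :
    embed m A = tensorFam (Function.update (fun _ => (1 : Matrix (Fin d) (Fin d) ℂ)) m A) := by
  ext x y
  simp only [embed, tensorFam]
  rw [← Finset.mul_prod_erase univ _ (mem_univ m), Function.update_self]
  congr 1
  refine Finset.prod_congr rfl fun i hi => ?_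
  rw [Function.update_of_ne (Finset.ne_of_mem_erase hi), Matrix.one_apply]

lemma tensorFam_one : tensorFam (fun _ : Fin n => (1 : Matrix (Fin d) (Fin d) ℂ)) = 1 := by
  ext x y
  simp only [tensorFam, Matrix.one_apply]
  rw [Finset.prod_boole]
  simp [funext_iff]

lemma embed_one (m : Fin n) : embed m (1 : Matrix (Fin d) (Fin d) ℂ) = 1 := by
  have h : Function.update (fun _ : Fin n => (1 : Matrix (Fin d) (Fin d) ℂ)) m 1 = fun _ => 1 := by
    funext i; by_cases h : i = m <;> simp [h]
  rw [embed_eq, h, tensorFam_one]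

lemma embed_mul (m : Fin n) (A B : Matrix (Fin d) (Fin d) ℂ) :
    embed m A * embed m B = embed m (A * B) := by
  rw [embed_eq, embed_eq, embed_eq, tensorFam_mul]
  have h : (fun i => Function.update (fun _ => (1 : Matrix (Fin d) (Fin d) ℂ)) m A i *
      Function.update (fun _ => (1 : Matrix (Fin d) (Fin d) ℂ)) m B i) = Function.update (fun _ => (1 : Matrix (Fin d) (Fin d) ℂ)) m (A * B) := by
    funext i
    by_cases h : i = m
    · subst h; simp
    · simp [Function.update_of_ne h]
  rw [h]

lemma embed_comm {m m' : Fin n} (h : m ≠ m') (A B : Matrix (Fin d) (Fin d) ℂ) :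
    embed m A * embed m' B = embed m' B * embed m A := by
  rw [embed_eq, embed_eq, tensorFam_mul, tensorFam_mul]
  have hfun : (fun i => Function.update (fun _ => (1 : Matrix (Fin d) (Fin d) ℂ)) m A i *
      Function.update (fun _ => (1 : Matrix (Fin d) (Fin d) ℂ)) m' B i) = (fun i =>
      Function.update (fun _ => (1 : Matrix (Fin d) (Fin d) ℂ)) m' B i *
      Function.update (fun _ => (1 : Matrix (Fin d) (Fin d) ℂ)) m A i) := by
    funext i
    by_cases h1 : i = m
    · subst h1; simp [Function.update_of_ne h, Function.update_of_ne (Ne.symm h)]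
    · by_cases h2 : i = m'
      · subst h2; simp [Function.update_of_ne h1]
      · simp [Function.update_of_ne h1, Function.update_of_ne h2]
  rw [hfun]

lemma embed_zero (m : Fin n) : embed m (0 : Matrix (Fin d) (Fin d) ℂ) = 0 := by
  ext x y; simp [embed]

lemma embed_smul (m : Fin n) (c : ℂ) (A : Matrix (Fin d) (Fin d) ℂ) :
    embed m (c • A) = c • embed m A := by
  ext x y; simp [embed, Matrix.smul_apply, smul_eq_mul, mul_assoc]

lemma embed_sum {β : Type*} (s : Finset β) (f : β → Matrix (Fin d) (Fin d) ℂ) (m : Fin n) :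
    embed m (∑ b ∈ s, f b) = ∑ b ∈ s, embed m (f b) := by
  ext x y; simp [embed, Matrix.sum_apply, Finset.sum_mul]

lemma eq_comp_swap_iff {j k : Fin n} (x g : Fin n → Fin d) :
    x = g ∘ (Equiv.swap j k) ↔ g = x ∘ (Equiv.swap j k) := by
  constructor <;>
    (rintro rfl; funext i; simp [Function.comp, Equiv.swap_apply_self])

lemma swapOp_mul_tensorFam (j k : Fin n) (A : Fin n → Matrix (Fin d) (Fin d) ℂ) :
    swapOp j k * tensorFam A =
      tensorFam (fun i => A (Equiv.swap j k i)) * swapOp j k := by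
  ext x y
  rw [Matrix.mul_apply, Matrix.mul_apply]
  simp only [swapOp, tensorFam]
  have hL : ∀ g : Fin n → Fin d, (if x = g ∘ (Equiv.swap j k) then (1:ℂ) else 0)
      = if g = x ∘ (Equiv.swap j k) then 1 else 0 :=
    fun g => if_congr (eq_comp_swap_iff x g) rfl rfl
  simp only [hL, ite_mul, one_mul, zero_mul, Finset.sum_ite_eq', Finset.mem_univ, if_true,
    mul_ite, mul_one, mul_zero, Finset.sum_ite_eq]
  simp only [Function.comp_apply]
  rw [← Equiv.prod_comp (Equiv.swap j k) (fun i => A i (x (Equiv.swap j k i)) (y i))]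
  simp [Equiv.swap_apply_self]

lemma swapOp_mul_self (j k : Fin n) : swapOp (n := n) (d := d) j k * swapOp j k = 1 := by
  ext x y
  rw [Matrix.mul_apply]
  simp only [swapOp]
  have hL : ∀ g : Fin n → Fin d, (if x = g ∘ (Equiv.swap j k) then (1:ℂ) else 0)
      = if g = x ∘ (Equiv.swap j k) then 1 else 0 :=
    fun g => if_congr (eq_comp_swap_iff x g) rfl rfl
  simp only [hL, ite_mul, one_mul, zero_mul, Finset.sum_ite_eq', Finset.mem_univ, if_true]
  rw [Matrix.one_apply]
  refine if_congr ?_ rfl rfl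
  constructor
  · intro h; funext i
    have := congrFun h (Equiv.swap j k i)
    simpa [Function.comp, Equiv.swap_apply_self] using this
  · rintro rfl; rfl

lemma swapOp_comm (j k : Fin n) : swapOp (n := n) (d := d) j k = swapOp k j := by
  unfold swapOp; rw [Equiv.swap_comm]

lemma swapOp_mul_embed (j k : Fin n) (A : Matrix (Fin d) (Fin d) ℂ) :
    swapOp j k * embed j A = embed k A * swapOp j k := by
  rw [embed_eq, embed_eq, swapOp_mul_tensorFam]
  have hfun : (fun i => Function.update (fun _ => (1 : Matrix (Fin d) (Fin d) ℂ)) j A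
      (Equiv.swap j k i)) = Function.update (fun _ => (1 : Matrix (Fin d) (Fin d) ℂ)) k A := by
    funext i
    rcases eq_or_ne i k with rfl|h
    · rw [Equiv.swap_apply_right, Function.update_self, Function.update_self]
    · have h2 : Equiv.swap j k i ≠ j := by
        rw [Ne, Equiv.swap_apply_eq_iff, Equiv.swap_apply_left]
        exact h
      rw [Function.update_of_ne h2, Function.update_of_ne h]
  rw [hfun]

lemma swapOp_mul_embed_of_ne {j k m : Fin n} (hj : m ≠ j) (hk : m ≠ k)
    (A : Matrix (Fin d) (Fin d) ℂ) :
    swapOp j k * embed m A = embed m A * swapOp j k := by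
  rw [embed_eq, swapOp_mul_tensorFam]
  have hfun : (fun i => Function.update (fun _ => (1 : Matrix (Fin d) (Fin d) ℂ)) m A
      (Equiv.swap j k i)) = Function.update (fun _ => (1 : Matrix (Fin d) (Fin d) ℂ)) m A := by
    funext i
    rcases eq_or_ne i m with rfl|h
    · rw [Equiv.swap_apply_of_ne_of_ne hj hk]
    · have h2 : Equiv.swap j k i ≠ m := by
        rw [Ne, Equiv.swap_apply_eq_iff, Equiv.swap_apply_of_ne_of_ne hj hk]
        exact h
      rw [Function.update_of_ne h2, Function.update_of_ne h]
  rw [hfun]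

lemma swapOp_mul_embed' (j k : Fin n) (A : Matrix (Fin d) (Fin d) ℂ) :
    swapOp j k * embed k A = embed j A * swapOp j k := by
  rw [swapOp_comm j k]; exact swapOp_mul_embed k j A

lemma comm_sq {j k : Fin n} (hjk : j ≠ k) (A : Matrix (Fin d) (Fin d) ℂ) (hA : A * A = 0) :
    (swapOp j k * embed j A - embed j A * swapOp j k) *
      (swapOp j k * embed j A - embed j A * swapOp j k)
      = (2 : ℂ) • (embed j A * embed k A) := by
  have hP := swapOp_mul_self (n := n) (d := d) j k
  have e1 := swapOp_mul_embed (d := d) j k A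
  have e2 := swapOp_mul_embed' (d := d) j k A
  have hEE : embed j A * embed j A = 0 := by rw [embed_mul, hA, embed_zero]
  have hE'E' : embed k A * embed k A = 0 := by rw [embed_mul, hA, embed_zero]
  have t1 : (swapOp j k * embed j A) * (swapOp j k * embed j A)
      = embed k A * embed j A := by
    rw [e1, mul_assoc, ← mul_assoc (swapOp j k), e2, mul_assoc, hP, mul_one]
  have t2 : (swapOp j k * embed j A) * (embed j A * swapOp j k) = 0 := by
    rw [e1, mul_assoc, ← mul_assoc (swapOp j k), e1, mul_assoc, hP, mul_one, hE'E']
  have t3 : (embed j A * swapOp j k) * (swapOp j k * embed j A) = 0 := by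
    rw [mul_assoc, ← mul_assoc (swapOp j k), hP, one_mul, hEE]
  have t4 : (embed j A * swapOp j k) * (embed j A * swapOp j k)
      = embed j A * embed k A := by
    rw [mul_assoc, ← mul_assoc (swapOp j k), e1, mul_assoc, hP, mul_one]
  rw [sub_mul, mul_sub, mul_sub, t1, t2, t3, t4, embed_comm (Ne.symm hjk)]
  rw [sub_zero, zero_sub, sub_neg_eq_add, two_smul]

lemma eq_comp_swap_iff' {j k : Fin n} (hjk : j ≠ k) (x y : Fin n → Fin d) :
    x = y ∘ (Equiv.swap j k) ↔
      (x j = y k ∧ x k = y j ∧ ∀ i, i ≠ j → i ≠ k → x i = y i) := by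
  constructor
  · rintro rfl
    refine ⟨by simp, by simp, fun i hij hik => ?_⟩
    simp [Equiv.swap_apply_of_ne_of_ne hij hik]
  · rintro ⟨h1, h2, h3⟩
    funext i
    rcases eq_or_ne i j with rfl|hij
    · simpa [Equiv.swap_apply_left] using h1
    rcases eq_or_ne i k with rfl|hik
    · simpa [Equiv.swap_apply_right] using h2
    simp [Equiv.swap_apply_of_ne_of_ne hij hik, h3 i hij hik]

lemma swapOp_eq_sum {j k : Fin n} (hjk : j ≠ k) :
    swapOp (n := n) (d := d) j k = ∑ a : Fin d, ∑ b : Fin d,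
      embed j (Matrix.single a b 1) * embed k (Matrix.single b a 1) := by
  have hterm : ∀ a b : Fin d, embed j (Matrix.single a b (1:ℂ)) * embed k (Matrix.single b a 1)
      = tensorFam (fun i => if i = j then Matrix.single a b 1 else
          if i = k then Matrix.single b a 1 else 1) := by
    intro a b
    rw [embed_eq, embed_eq, tensorFam_mul]
    have hfun : (fun i => Function.update (fun _ => (1 : Matrix (Fin d) (Fin d) ℂ)) j
        (Matrix.single a b 1) i *
        Function.update (fun _ => (1 : Matrix (Fin d) (Fin d) ℂ)) k (Matrix.single b a 1) i)
        = (fun i => if i = j then Matrix.single a b 1 else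
          if i = k then Matrix.single b a 1 else 1) := by
      funext i
      rcases eq_or_ne i j with rfl|h1
      · rw [Function.update_self, Function.update_of_ne hjk, mul_one, if_pos rfl]
      rcases eq_or_ne i k with rfl|h2
      · rw [Function.update_of_ne h1, Function.update_self, one_mul, if_neg h1, if_pos rfl]
      · rw [Function.update_of_ne h1, Function.update_of_ne h2, one_mul, if_neg h1, if_neg h2]
    rw [hfun]
  ext x y
  rw [Matrix.sum_apply]
  simp only [Matrix.sum_apply, hterm, tensorFam, swapOp]
  have hk' : k ∈ univ.erase j := Finset.mem_erase.mpr ⟨Ne.symm hjk, Finset.mem_univ k⟩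
  have hprod : ∀ a b : Fin d, (∏ i, (if i = j then Matrix.single a b (1:ℂ) else
      if i = k then Matrix.single b a 1 else 1) (x i) (y i))
      = (if a = x j ∧ b = y j then (1:ℂ) else 0) * ((if b = x k ∧ a = y k then (1:ℂ) else 0) *
        ∏ i ∈ (univ.erase j).erase k, (if x i = y i then (1:ℂ) else 0)) := by
    intro a b
    rw [← Finset.mul_prod_erase univ _ (Finset.mem_univ j),
      ← Finset.mul_prod_erase _ _ (Finset.mem_erase.mpr ⟨Ne.symm hjk, Finset.mem_univ k⟩)]
    rw [if_pos rfl, if_neg (Ne.symm hjk), if_pos rfl]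
    have hrest : (∏ i ∈ (univ.erase j).erase k, (if i = j then Matrix.single a b (1:ℂ) else
        if i = k then Matrix.single b a 1 else 1) (x i) (y i))
        = ∏ i ∈ (univ.erase j).erase k, (if x i = y i then (1:ℂ) else 0) := by
      refine Finset.prod_congr rfl fun i hi => ?_
      rw [Finset.mem_erase, Finset.mem_erase] at hi
      rw [if_neg hi.2.1, if_neg hi.1, Matrix.one_apply]
    rw [hrest]
    simp [Matrix.single]
  simp only [hprod]
  rw [Finset.prod_boole]
  simp only [ite_and, ite_mul, one_mul, zero_mul, mul_ite, mul_one, mul_zero,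
    Finset.sum_ite_eq, Finset.mem_univ, if_true, Finset.sum_ite_eq', Finset.sum_const_zero]
  rw [if_congr (eq_comp_swap_iff' hjk x y) rfl rfl]
  simp only [Finset.mem_erase, Finset.mem_univ, and_true]
  by_cases hC : ∀ i : Fin n, i ≠ k ∧ i ≠ j → x i = y i
  · simp only [if_pos hC, Finset.sum_ite_eq, Finset.sum_ite_eq', Finset.mem_univ, if_true]
    have h3 : ∀ i : Fin n, i ≠ j → i ≠ k → x i = y i := fun i hij hik => hC i ⟨hik, hij⟩
    have h4 : ∀ i : Fin n, ¬ j = i → ¬ k = i → x i = y i :=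
      fun i a b => h3 i (fun h => a h.symm) (fun h => b h.symm)
    by_cases c1 : x j = y k
    · by_cases c2 : x k = y j
      · rw [if_pos ⟨c1, c2, h3⟩, if_pos c1.symm, if_pos c2]
      · rw [if_neg (by tauto), if_pos c1.symm, if_neg c2]
    · rw [if_neg (by tauto), if_neg (fun h => c1 h.symm)]
  · have hL : ¬(x j = y k ∧ x k = y j ∧ ∀ i : Fin n, i ≠ j → i ≠ k → x i = y i) := by
      rintro ⟨-, -, h3⟩
      exact hC fun i hi => h3 i hi.2 hi.1
    simp only [if_neg hC, if_neg hL, Finset.sum_const_zero]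

lemma step_lemma (hd : 2 ≤ d) {𝒜 : Subalgebra ℂ (Matrix (Fin n → Fin d) (Fin n → Fin d) ℂ)}
    {j k : Fin n} (hjk : j ≠ k)
    (hEj : ∀ A, embed j A ∈ 𝒜)
    (hC : ∀ A, swapOp j k * embed j A - embed j A * swapOp j k ∈ 𝒜) :
    (∀ A, embed k A ∈ 𝒜) ∧ swapOp (n := n) (d := d) j k ∈ 𝒜 := by
  have key : ∀ a b : Fin d, a ≠ b → embed k (Matrix.single a b (1:ℂ)) ∈ 𝒜 := by
    intro a b hab
    set A := Matrix.single a b (1:ℂ) with hAdef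
    have hA2 : A * A = 0 := single_mul_single_of_ne (c := 1) a b a (Ne.symm hab) 1
    have h1 : embed j A * embed k A ∈ 𝒜 := by
      have h2 := 𝒜.mul_mem (hC A) (hC A)
      rw [comm_sq hjk A hA2] at h2
      have h3 := 𝒜.smul_mem h2 ((2:ℂ)⁻¹)
      rwa [smul_smul, inv_mul_cancel₀ two_ne_zero, one_smul] at h3
    have h4 : ∀ i : Fin d, embed j (Matrix.single i i (1:ℂ)) * embed k A ∈ 𝒜 := by
      intro i
      have hmem := 𝒜.mul_mem (𝒜.mul_mem (hEj (Matrix.single i a 1)) h1)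
        (hEj (Matrix.single b i 1))
      have heq : embed j (Matrix.single i a (1:ℂ)) * (embed j A * embed k A) *
          embed j (Matrix.single b i 1) = embed j (Matrix.single i i 1) * embed k A := by
        rw [← mul_assoc, embed_mul, hAdef, single_mul_single_same, one_mul,
          mul_assoc, embed_comm (Ne.symm hjk) A]
        rw [← mul_assoc, embed_mul, single_mul_single_same, one_mul, hAdef]
      rwa [heq] at hmem
    have h5 : (∑ i : Fin d, embed j (Matrix.single i i (1:ℂ))) * embed k A ∈ 𝒜 := by
      rw [Finset.sum_mul]
      exact 𝒜.sum_mem fun i _ => h4 i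
    have h6 : (∑ i : Fin d, Matrix.single i i (1:ℂ)) = 1 := by
      ext p q
      simp [Matrix.single, Matrix.sum_apply, Matrix.one_apply, ite_and,
        Finset.sum_ite_eq, eq_comm]
    rwa [← embed_sum, h6, embed_one, one_mul] at h5
  have hEk : ∀ A, embed k A ∈ 𝒜 := by
    have hdiag : ∀ a : Fin d, embed k (Matrix.single a a (1:ℂ)) ∈ 𝒜 := by
      intro a
      haveI : Nontrivial (Fin d) := Fin.nontrivial_iff_two_le.mpr hd
      obtain ⟨b, hb⟩ := exists_ne a
      have := 𝒜.mul_mem (key a b (Ne.symm hb)) (key b a hb)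
      rwa [embed_mul, single_mul_single_same, one_mul] at this
    have hstd : ∀ a b : Fin d, embed k (Matrix.single a b (1:ℂ)) ∈ 𝒜 := by
      intro a b
      rcases eq_or_ne a b with rfl|h
      · exact hdiag a
      · exact key a b h
    intro A
    have hA : embed k A = ∑ p : Fin d, ∑ q : Fin d, (A p q) • embed k (Matrix.single p q 1) := by
      conv_lhs => rw [matrix_eq_sum_single A]
      rw [embed_sum]
      refine Finset.sum_congr rfl fun p _ => ?_
      rw [embed_sum]
      refine Finset.sum_congr rfl fun q _ => ?_
      rw [show Matrix.single p q (A p q) = (A p q) • Matrix.single p q (1:ℂ) by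
        rw [smul_single, smul_eq_mul, mul_one], embed_smul]
    rw [hA]
    exact 𝒜.sum_mem fun p _ => 𝒜.sum_mem fun q _ => 𝒜.smul_mem (hstd p q) _
  refine ⟨hEk, ?_⟩
  rw [swapOp_eq_sum hjk]
  exact 𝒜.sum_mem fun a _ => 𝒜.sum_mem fun b _ => 𝒜.mul_mem (hEj _) (hEk _)


/-- If a set `S ⊆ M_d(ℂ)` generates the full matrix algebra `M_d(ℂ)` as a
unital subalgebra, then the embeddings of the elements of `S` at the edge site `1` of a chain
of `n+1` sites, together with the chain permutation Hamiltonian `H_P = Σ_s P_{s,s+1}`,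
generate the full matrix algebra of operators on `(ℂ^d)^{⊗(n+1)}`. -/
theorem edge_site_generates_full_algebra (n d : ℕ) (S : Set (Matrix (Fin d) (Fin d) ℂ))
    (hS : Algebra.adjoin ℂ S = ⊤) :
    Algebra.adjoin ℂ
        ((embed (0 : Fin (n+1)) '' S) ∪ {∑ s : Fin n, swapOp s.castSucc s.succ}) = ⊤ := by
  classical
  set 𝒜 := Algebra.adjoin ℂ
    ((embed (0 : Fin (n+1)) '' S) ∪ {∑ s : Fin n, swapOp s.castSucc s.succ}) with h𝒜
  rw [eq_top_iff]
  rcases lt_or_ge d 2 with hd | hd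
  · -- degenerate case d ≤ 1
    haveI : Subsingleton (Fin d) := ⟨fun a b => Fin.ext (by omega)⟩
    haveI hsub : Subsingleton (Fin (n+1) → Fin d) :=
      ⟨fun f g => funext fun i => Subsingleton.elim _ _⟩
    rintro M -
    rw [matrix_eq_sum_single M]
    refine 𝒜.sum_mem fun p _ => 𝒜.sum_mem fun q _ => ?_
    have h1 : Matrix.single p q (M p q) = (M p q) • (1 : Matrix (Fin (n+1) → Fin d) (Fin (n+1) → Fin d) ℂ) := by
      ext u v
      simp [Matrix.single, Matrix.one_apply, Subsingleton.elim p u,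
        Subsingleton.elim q v, Subsingleton.elim u v]
    rw [h1]
    exact 𝒜.smul_mem (one_mem 𝒜) _
  · have hH : (∑ s : Fin n, swapOp (d := d) s.castSucc s.succ) ∈ 𝒜 :=
      Algebra.subset_adjoin (Set.mem_union_right _ rfl)
    have hE0 : ∀ A : Matrix (Fin d) (Fin d) ℂ, embed (0 : Fin (n+1)) A ∈ 𝒜 := by
      intro A
      have hA : A ∈ Algebra.adjoin ℂ S := by rw [hS]; exact Algebra.mem_top
      refine Algebra.adjoin_induction
        (fun x hx => Algebra.subset_adjoin (Set.mem_union_left _ ⟨x, hx, rfl⟩))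
        (fun r => ?_) (fun x y _ _ hx hy => ?_) (fun x y _ _ hx hy => ?_) hA
      · rw [Algebra.algebraMap_eq_smul_one, embed_smul, embed_one,
          ← Algebra.algebraMap_eq_smul_one]
        exact 𝒜.algebraMap_mem r
      · rw [show embed (0 : Fin (n+1)) (x + y) = embed 0 x + embed 0 y by
          ext u v; simp [embed, add_mul]]
        exact 𝒜.add_mem hx hy
      · rw [← embed_mul]
        exact 𝒜.mul_mem hx hy
    have main : ∀ K : ℕ,
        (∀ m : Fin (n+1), (m : ℕ) ≤ K → ∀ A, embed m A ∈ 𝒜) ∧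
        (∀ s : Fin n, (s : ℕ) < K → swapOp (d := d) s.castSucc s.succ ∈ 𝒜) := by
      intro K
      induction K with
      | zero =>
        refine ⟨fun m hm A => ?_, fun s hs => absurd hs (by omega)⟩
        have hm0 : m = 0 := by
          apply Fin.ext
          simp only [Fin.val_zero]
          omega
        rw [hm0]; exact hE0 A
      | succ K ih =>
        obtain ⟨ihE, ihP⟩ := ih
        by_cases hK : K < n
        · set s₀ : Fin n := ⟨K, hK⟩ with hs₀
          have hne : (s₀.castSucc : Fin (n+1)) ≠ s₀.succ := by
            simp [Fin.ext_iff]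
          have hrest : (∑ s ∈ univ.filter (fun s : Fin n => K ≤ (s : ℕ)),
              swapOp (d := d) s.castSucc s.succ) ∈ 𝒜 := by
            have hsplit := Finset.sum_filter_add_sum_filter_not univ
              (fun s : Fin n => K ≤ (s : ℕ)) (fun s => swapOp (d := d) s.castSucc s.succ)
            have hnot : (∑ s ∈ univ.filter (fun s : Fin n => ¬ K ≤ (s : ℕ)),
                swapOp (d := d) s.castSucc s.succ) ∈ 𝒜 :=
              𝒜.sum_mem fun s hs => ihP s (by simp at hs; omega)
            have hsub := 𝒜.sub_mem hH hnot
            rwa [show (∑ s : Fin n, swapOp (d := d) s.castSucc s.succ) -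
                (∑ s ∈ univ.filter (fun s : Fin n => ¬ K ≤ (s : ℕ)),
                  swapOp (d := d) s.castSucc s.succ)
                = ∑ s ∈ univ.filter (fun s : Fin n => K ≤ (s : ℕ)),
                  swapOp (d := d) s.castSucc s.succ by
              rw [← hsplit, add_sub_cancel_right]] at hsub
          have hEj : ∀ A, embed (s₀.castSucc) A ∈ 𝒜 :=
            fun A => ihE s₀.castSucc (by simp [hs₀]) A
          have hCm : ∀ A, swapOp s₀.castSucc s₀.succ * embed s₀.castSucc A -
              embed s₀.castSucc A * swapOp s₀.castSucc s₀.succ ∈ 𝒜 := by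
            intro A
            have hcomm := 𝒜.sub_mem (𝒜.mul_mem hrest (hEj A)) (𝒜.mul_mem (hEj A) hrest)
            rw [Finset.sum_mul, Finset.mul_sum, ← Finset.sum_sub_distrib] at hcomm
            rw [Finset.sum_eq_single_of_mem s₀ (by simp [hs₀]) ?_] at hcomm
            · exact hcomm
            · intro s hs hne'
              have hsK : K < (s : ℕ) := by
                simp only [Finset.mem_filter, Finset.mem_univ, true_and] at hs
                rcases lt_or_eq_of_le hs with h|h
                · exact h
                · exact absurd (Fin.ext h.symm : s = s₀) hne'
              have h1 : (s₀.castSucc : Fin (n+1)) ≠ s.castSucc := by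
                simp [Fin.ext_iff]; omega
              have h2 : (s₀.castSucc : Fin (n+1)) ≠ s.succ := by
                simp only [Ne, Fin.ext_iff, Fin.val_castSucc, Fin.val_succ, hs₀, Fin.val_mk]; omega
              rw [swapOp_mul_embed_of_ne h1 h2, sub_self]
          obtain ⟨hEk', hPk'⟩ := step_lemma hd hne hEj hCm
          constructor
          · intro m hm A
            rcases Nat.lt_succ_iff_lt_or_eq.mp (Nat.lt_succ_of_le hm) with h|h
            · exact ihE m (Nat.lt_succ_iff.mp h) A
            · have hms : m = s₀.succ := by
                apply Fin.ext
                simp [hs₀, Fin.val_succ]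
                omega
              rw [hms]; exact hEk' A
          · intro s hs
            rcases Nat.lt_succ_iff_lt_or_eq.mp hs with h|h
            · exact ihP s h
            · have hss : s = s₀ := Fin.ext (by simp [hs₀]; omega)
              rw [hss]; exact hPk'
        · exact ⟨fun m hm A => ihE m (by have := m.isLt; omega) A,
            fun s hs => ihP s (by have := s.isLt; omega)⟩
    obtain ⟨hall, -⟩ := main n
    have hsite : ∀ (m : Fin (n+1)) (A : Matrix (Fin d) (Fin d) ℂ), embed m A ∈ 𝒜 :=
      fun m A => hall m (Nat.lt_succ_iff.mp m.isLt) A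
    have htens : ∀ B : Fin (n+1) → Matrix (Fin d) (Fin d) ℂ, tensorFam B ∈ 𝒜 := by
      intro B
      have claim : ∀ t : Finset (Fin (n+1)),
          tensorFam (fun i => if i ∈ t then B i else 1) ∈ 𝒜 := by
        intro t
        induction t using Finset.induction_on with
        | empty =>
          rw [show (fun i : Fin (n+1) =>
              if i ∈ (∅ : Finset (Fin (n+1))) then B i else (1 : Matrix (Fin d) (Fin d) ℂ)) =
              fun _ => 1 by funext i; simp, tensorFam_one]
          exact one_mem 𝒜
        | @insert a t ha ih =>
          have heq : tensorFam (fun i => if i ∈ insert a t then B i else 1)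
              = embed a (B a) * tensorFam (fun i => if i ∈ t then B i else 1) := by
            rw [embed_eq, tensorFam_mul]
            have hfun : (fun i : Fin (n+1) => if i ∈ insert a t then B i
                else (1 : Matrix (Fin d) (Fin d) ℂ)) = (fun i =>
                Function.update (fun _ => (1 : Matrix (Fin d) (Fin d) ℂ)) a (B a) i *
                (if i ∈ t then B i else 1)) := by
              funext i
              rcases eq_or_ne i a with rfl|h
              · simp [ha]
              · simp [Function.update_of_ne h, Finset.mem_insert, h]
            rw [hfun]
          rw [heq]
          exact 𝒜.mul_mem (hsite a _) ih
      have := claim univ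
      simpa using this
    rintro M -
    rw [matrix_eq_sum_single M]
    refine 𝒜.sum_mem fun x _ => 𝒜.sum_mem fun y _ => ?_
    rw [show Matrix.single x y (M x y) = (M x y) • Matrix.single x y (1:ℂ) by
      rw [smul_single, smul_eq_mul, mul_one]]
    refine 𝒜.smul_mem ?_ _
    rw [show Matrix.single x y (1:ℂ)
        = tensorFam (fun m => Matrix.single (x m) (y m) (1:ℂ)) by
      ext u v
      simp only [tensorFam, Matrix.single, Matrix.of_apply]
      rw [Finset.prod_boole]
      by_cases hc : x = u ∧ y = v
      · rw [if_pos hc, if_pos (by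
          obtain ⟨h1, h2⟩ := hc; subst h1; subst h2; exact fun i _ => ⟨rfl, rfl⟩)]
      · rw [if_neg hc, if_neg (fun h => hc ⟨funext fun i => (h i (Finset.mem_univ i)).1,
          funext fun i => (h i (Finset.mem_univ i)).2⟩)]]
    exact htens _

end
end
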